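/- Let A be a real symmetric 3×3 matrix and let 0 < c₁ ≤ c₂ be real numbers such that c₁·Id ≤ A ≤ c₂·Id in the Loewner order (i.e., A − c₁·Id and c₂·Id − A are positive semidefinite). Then the cofactor matrix M(A) of A (which equals the adjugate of A, since A is symmetric) satisfies c₁²·Id ≤ M(A) ≤ c₂²·Id in the Loewner order. -/

import Mathlib

open Matrix Finset

private lemma dsub (f : Fin 3 → ℝ) (c : ℝ) :
    diagonal f - c • (1 : Matrix (Fin 3) (Fin 3) ℝ) = diagonal (fun i => f i - c) := by
  ext i j
  by_cases h : i = j <;> simp [h, Matrix.one_apply, Matrix.diagonal_apply]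

private lemma dsub' (f : Fin 3 → ℝ) (c : ℝ) :
    c • (1 : Matrix (Fin 3) (Fin 3) ℝ) - diagonal f = diagonal (fun i => c - f i) := by
  ext i j
  by_cases h : i = j <;> simp [h, Matrix.one_apply, Matrix.diagonal_apply]

/-- Loewner-order bounds on the cofactor matrix of a symmetric
3×3 matrix with `c₁ Id ≤ A ≤ c₂ Id`. -/
theorem stmt_8 (A : Matrix (Fin 3) (Fin 3) ℝ) (hA : A.IsSymm)
    (c₁ c₂ : ℝ) (hc₁ : 0 < c₁) (hc₁₂ : c₁ ≤ c₂)
    (h₁ : (A - c₁ • (1 : Matrix (Fin 3) (Fin 3) ℝ)).PosSemidef)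
    (h₂ : (c₂ • (1 : Matrix (Fin 3) (Fin 3) ℝ) - A).PosSemidef) :
    ((A.adjugate)ᵀ - c₁ ^ 2 • (1 : Matrix (Fin 3) (Fin 3) ℝ)).PosSemidef ∧
    (c₂ ^ 2 • (1 : Matrix (Fin 3) (Fin 3) ℝ) - (A.adjugate)ᵀ).PosSemidef := by
  have hH : A.IsHermitian := by
    rw [Matrix.IsHermitian]
    ext i j
    simpa using congrFun (congrFun hA i) j
  set U : Matrix (Fin 3) (Fin 3) ℝ := ↑hH.eigenvectorUnitary with hUdef
  set lam : Fin 3 → ℝ := hH.eigenvalues with hlam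
  have hU1 : U * star U = 1 := (Matrix.mem_unitaryGroup_iff).mp hH.eigenvectorUnitary.2
  have hU2 : star U * U = 1 := (Matrix.mem_unitaryGroup_iff').mp hH.eigenvectorUnitary.2
  have hofReal : (RCLike.ofReal ∘ lam : Fin 3 → ℝ) = lam := by
    ext i; simp
  have hspec : A = U * diagonal lam * star U := by
    have := hH.spectral_theorem
    rwa [hofReal] at this
  have hdiag : star U * A * U = diagonal lam := by
    have := hH.conjStarAlgAut_star_eigenvectorUnitary
    rw [hofReal] at this
    rw [← this, Unitary.conjStarAlgAut_apply, Unitary.coe_star, star_star]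
  have hsmul : ∀ c : ℝ, star U * (c • (1 : Matrix (Fin 3) (Fin 3) ℝ)) * U
      = c • (1 : Matrix (Fin 3) (Fin 3) ℝ) := by
    intro c
    rw [Matrix.mul_smul, Matrix.smul_mul, mul_one, hU2]
  have hlow : ∀ i, c₁ ≤ lam i := by
    intro i
    have hps' := h₁.conjTranspose_mul_mul_same U
    have hps : (star U * (A - c₁ • (1 : Matrix (Fin 3) (Fin 3) ℝ)) * U).PosSemidef := hps'
    rw [Matrix.mul_sub, Matrix.sub_mul, hdiag, hsmul, dsub] at hps
    have := posSemidef_diagonal_iff.mp hps i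
    linarith
  have hhigh : ∀ i, lam i ≤ c₂ := by
    intro i
    have hps' := h₂.conjTranspose_mul_mul_same U
    have hps : (star U * (c₂ • (1 : Matrix (Fin 3) (Fin 3) ℝ) - A) * U).PosSemidef := hps'
    rw [Matrix.mul_sub, Matrix.sub_mul, hdiag, hsmul, dsub'] at hps
    have := posSemidef_diagonal_iff.mp hps i
    linarith
  have hdetstar : (star U).det = U.det := by
    rw [Matrix.star_eq_conjTranspose, Matrix.det_conjTranspose, star_trivial]
  have hdetsq : U.det * U.det = 1 := by
    have : U.det * (star U).det = 1 := by rw [← Matrix.det_mul, hU1, Matrix.det_one]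
    rwa [hdetstar] at this
  have hadjU : adjugate U = U.det • star U := by
    calc adjugate U = (star U * U) * adjugate U := by rw [hU2, one_mul]
      _ = star U * (U * adjugate U) := by rw [mul_assoc]
      _ = star U * (U.det • 1) := by rw [Matrix.mul_adjugate]
      _ = U.det • star U := by rw [Matrix.mul_smul, mul_one]
  have hadjstarU : adjugate (star U) = U.det • U := by
    calc adjugate (star U) = (U * star U) * adjugate (star U) := by rw [hU1, one_mul]
      _ = U * (star U * adjugate (star U)) := by rw [mul_assoc]
      _ = U * ((star U).det • 1) := by rw [Matrix.mul_adjugate]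
      _ = U.det • U := by rw [Matrix.mul_smul, mul_one, hdetstar]
  set mu : Fin 3 → ℝ := fun i => ∏ j ∈ Finset.univ.erase i, lam j with hmu
  have hadjD : adjugate (diagonal lam) = diagonal mu := by
    rw [Matrix.adjugate_diagonal]
  have hadjA : adjugate A = U * diagonal mu * star U := by
    rw [hspec, Matrix.adjugate_mul_distrib, Matrix.adjugate_mul_distrib,
      hadjU, hadjstarU, hadjD]
    simp only [Matrix.smul_mul, Matrix.mul_smul, smul_smul, hdetsq, one_smul]
    rw [mul_assoc]
  have hAT : (A.adjugate)ᵀ = adjugate A := by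
    rw [Matrix.adjugate_transpose, hA.eq]
  have hcard : ∀ i : Fin 3, (Finset.univ.erase i).card = 2 := by
    intro i
    rw [Finset.card_erase_of_mem (Finset.mem_univ i), Finset.card_univ]
    rfl
  have hmulow : ∀ i, c₁ ^ 2 ≤ mu i := by
    intro i
    calc c₁ ^ 2 = ∏ _j ∈ Finset.univ.erase i, c₁ := by rw [Finset.prod_const, hcard]
      _ ≤ mu i := Finset.prod_le_prod (fun j _ => le_of_lt hc₁) (fun j _ => hlow j)
  have hmuhigh : ∀ i, mu i ≤ c₂ ^ 2 := by
    intro i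
    calc mu i ≤ ∏ _j ∈ Finset.univ.erase i, c₂ :=
          Finset.prod_le_prod (fun j _ => le_trans (le_of_lt hc₁) (hlow j)) (fun j _ => hhigh j)
      _ = c₂ ^ 2 := by rw [Finset.prod_const, hcard]
  have hconj : ∀ c : ℝ, c • (1 : Matrix (Fin 3) (Fin 3) ℝ)
      = U * (c • (1 : Matrix (Fin 3) (Fin 3) ℝ)) * star U := by
    intro c
    rw [Matrix.mul_smul, Matrix.smul_mul, mul_one, hU1]
  constructor
  · have key : (diagonal (fun i => mu i - c₁ ^ 2)).PosSemidef :=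
      posSemidef_diagonal_iff.mpr (fun i => by simpa using sub_nonneg.mpr (hmulow i))
    have h' := key.mul_mul_conjTranspose_same U
    have this' : (U * diagonal (fun i => mu i - c₁ ^ 2) * star U).PosSemidef := h'
    rw [← dsub, Matrix.mul_sub, Matrix.sub_mul, ← hconj (c₁ ^ 2), ← hadjA, ← hAT] at this'
    exact this'
  · have key : (diagonal (fun i => c₂ ^ 2 - mu i)).PosSemidef :=
      posSemidef_diagonal_iff.mpr (fun i => by simpa using sub_nonneg.mpr (hmuhigh i))
    have h' := key.mul_mul_conjTranspose_same U
    have this' : (U * diagonal (fun i => c₂ ^ 2 - mu i) * star U).PosSemidef := h'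
    rw [← dsub', Matrix.mul_sub, Matrix.sub_mul, ← hconj (c₂ ^ 2), ← hadjA, ← hAT] at this'
    exact this'
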